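/- arXiv:2102.11369 — 2 statements merged into one kernel-verified Lean document; each statement's English description precedes it below -/
import Mathlib

section
/- If a convex quadrilateral Q is both tangential (admits an inscribed circle tangent to all four sides) and a midpoint diagonal quadrilateral, then Q is a kite: two pairs of adjacent sides of Q are equal; in particular the diagonals of Q are perpendicular. -/
open EuclideanGeometry

noncomputable section

abbrev Pt := EuclideanSpace ℝ (Fin 2)

/-- Convex quadrilateral with vertices in cyclic order: no three consecutive
vertices collinear and the diagonals cross. -/
def ConvexQuad (A₁ A₂ A₃ A₄ : Pt) : Prop :=
  AffineIndependent ℝ ![A₁, A₂, A₃] ∧ AffineIndependent ℝ ![A₂, A₃, A₄] ∧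
  AffineIndependent ℝ ![A₃, A₄, A₁] ∧ AffineIndependent ℝ ![A₄, A₁, A₂] ∧
  ∃ P : Pt, P ∈ openSegment ℝ A₁ A₃ ∧ P ∈ openSegment ℝ A₂ A₄

/-- Tangential quadrilateral: there is a circle inside the quadrilateral which
touches each of the four sides (in exactly one point). -/
def IsTangential (A₁ A₂ A₃ A₄ : Pt) : Prop :=
  ∃ (c : Pt) (ρ : ℝ), 0 < ρ ∧
    Metric.sphere c ρ ⊆ convexHull ℝ {A₁, A₂, A₃, A₄} ∧
    (∃! p : Pt, p ∈ Metric.sphere c ρ ∩ segment ℝ A₁ A₂) ∧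
    (∃! p : Pt, p ∈ Metric.sphere c ρ ∩ segment ℝ A₂ A₃) ∧
    (∃! p : Pt, p ∈ Metric.sphere c ρ ∩ segment ℝ A₃ A₄) ∧
    (∃! p : Pt, p ∈ Metric.sphere c ρ ∩ segment ℝ A₄ A₁)

/-- Midpoint diagonal quadrilateral. -/
def IsMidpointDiagonalQuad (A₁ A₂ A₃ A₄ : Pt) : Prop :=
  ∃ P : Pt, P ∈ openSegment ℝ A₁ A₃ ∧ P ∈ openSegment ℝ A₂ A₄ ∧
    (P = midpoint ℝ A₁ A₃ ∨ P = midpoint ℝ A₂ A₄)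

open RealInnerProductSpace

set_option maxHeartbeats 1000000

/-- Tangent-length relation for one side of a convex quadrilateral containing a
circle touching that side. -/
lemma tangent_len (A B C D c P p : Pt) (ρ : ℝ) (hρ : 0 < ρ)
    (hABC : ¬ Collinear ℝ ({A, B, C} : Set Pt))
    (hPAC : P ∈ openSegment ℝ A C) (hPBD : P ∈ openSegment ℝ B D)
    (hsub : Metric.sphere c ρ ⊆ convexHull ℝ ({A, B, C, D} : Set Pt))
    (hp : p ∈ Metric.sphere c ρ) (hpseg : p ∈ segment ℝ A B) :
    dist A p ^ 2 + ρ ^ 2 = dist A c ^ 2 ∧ dist B p ^ 2 + ρ ^ 2 = dist B c ^ 2 := by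
  set w : Pt := B - A with hw
  set z : Pt := C - A with hz
  have hwne : w ≠ 0 := by
    intro h
    apply hABC
    have : A = B := by
      have := sub_eq_zero.mp h; exact this.symm
    rw [← this]
    have : ({A, A, C} : Set Pt) = {A, C} := by simp
    rw [this]; exact collinear_pair ℝ A C
  have hwnorm : (0:ℝ) < ‖w‖ := norm_pos_iff.mpr hwne
  set μ : ℝ := ⟪w, z⟫ / (‖w‖^2) with hμ
  set g : Pt := z - μ • w with hgdef
  have hgw : ⟪g, w⟫ = 0 := by
    rw [hgdef, inner_sub_left, real_inner_smul_left, hμ, real_inner_comm w z,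
      real_inner_self_eq_norm_sq]
    field_simp; ring
  have hzgw : z = g + μ • w := by rw [hgdef]; abel
  have hgz : ⟪g, z⟫ = ‖g‖^2 := by
    conv_lhs => rw [hzgw]
    rw [inner_add_right, real_inner_smul_right, hgw, real_inner_self_eq_norm_sq]
    ring
  have hgne : g ≠ 0 := by
    intro h
    apply hABC
    have hzmu : z = μ • w := by rw [hzgw, h, zero_add]
    rw [collinear_iff_of_mem (Set.mem_insert A _)]
    refine ⟨w, ?_⟩
    intro q hq
    simp only [Set.mem_insert_iff, Set.mem_singleton_iff] at hq
    rcases hq with rfl | rfl | h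
    · exact ⟨0, by simp⟩
    · refine ⟨1, ?_⟩
      rw [one_smul, vadd_eq_add, hw]; abel
    · refine ⟨μ, ?_⟩
      rw [h, vadd_eq_add]
      exact sub_eq_iff_eq_add.mp (by rw [← hz]; exact hzmu)
  have hgnorm : (0:ℝ) < ‖g‖ := norm_pos_iff.mpr hgne
  -- ℓ X = ⟪g, X - A⟫ is zero on A, B and positive on C, D
  have hlB : ⟪g, B - A⟫ = 0 := hgw
  have hlC : ⟪g, C - A⟫ = ‖g‖^2 := hgz
  obtain ⟨a₁, b₁, ha₁, hb₁, hab₁, hP₁⟩ := hPAC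
  obtain ⟨a₂, b₂, ha₂, hb₂, hab₂, hP₂⟩ := hPBD
  have hPA : P - A = b₁ • z := by
    rw [← hP₁, hz]
    have : a₁ = 1 - b₁ := by linarith
    rw [this]; module
  have hlP : ⟪g, P - A⟫ = b₁ * ‖g‖^2 := by
    rw [hPA, real_inner_smul_right, hgz]
  have hPA2 : P - A = a₂ • (B - A) + b₂ • (D - A) := by
    rw [← hP₂]
    have : a₂ = 1 - b₂ := by linarith
    rw [this]; module
  have hlDpos : 0 < ⟪g, D - A⟫ := by
    have h0 : ⟪g, P - A⟫ = a₂ * ⟪g, B - A⟫ + b₂ * ⟪g, D - A⟫ := by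
      rw [hPA2, inner_add_right, real_inner_smul_right, real_inner_smul_right]
    rw [hlP, hlB] at h0
    have hgpos : 0 < ‖g‖^2 := by positivity
    nlinarith
  -- every point of the hull satisfies 0 ≤ ⟪g, x - A⟫
  have hhull : ∀ x ∈ convexHull ℝ ({A, B, C, D} : Set Pt), 0 ≤ ⟪g, x - A⟫ := by
    intro x hx
    have hconv : Convex ℝ {x : Pt | 0 ≤ ⟪g, x - A⟫} := by
      intro x hx y hy a b ha hb hab
      simp only [Set.mem_setOf_eq] at *
      have : (a • x + b • y) - A = a • (x - A) + b • (y - A) := by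
        have : a = 1 - b := by linarith
        rw [this]; module
      rw [this, inner_add_right, real_inner_smul_right, real_inner_smul_right]
      positivity
    have hsubset : ({A, B, C, D} : Set Pt) ⊆ {x : Pt | 0 ≤ ⟪g, x - A⟫} := by
      intro q hq
      simp only [Set.mem_insert_iff, Set.mem_singleton_iff] at hq
      rcases hq with rfl | rfl | rfl | rfl
      · simp only [Set.mem_setOf_eq, sub_self, inner_zero_right, le_refl]
      · simp only [Set.mem_setOf_eq, hlB, le_refl]
      · simp only [Set.mem_setOf_eq, hlC]; positivity
      · exact le_of_lt hlDpos
    exact convexHull_min hsubset hconv hx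
  -- the point x₀ := c - (ρ/‖g‖) • g lies on the sphere
  have hx₀ : c - (ρ/‖g‖) • g ∈ Metric.sphere c ρ := by
    rw [Metric.mem_sphere, dist_eq_norm]
    have : c - (ρ/‖g‖) • g - c = -((ρ/‖g‖) • g) := by abel
    rw [this, norm_neg, norm_smul, Real.norm_eq_abs, abs_of_pos (by positivity)]
    field_simp
  have hkey1 : ρ * ‖g‖ ≤ ⟪g, c - A⟫ := by
    have h0 := hhull _ (hsub hx₀)
    have : c - (ρ/‖g‖) • g - A = (c - A) - (ρ/‖g‖) • g := by abel
    rw [this, inner_sub_right, real_inner_smul_right, real_inner_self_eq_norm_sq] at h0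
    have hgg : ρ / ‖g‖ * ‖g‖ ^ 2 = ρ * ‖g‖ := by field_simp
    nlinarith [h0]
  -- p is on the segment AB, so ⟪g, p - A⟫ = 0
  obtain ⟨a₃, b₃, ha₃, hb₃, hab₃, hp₃⟩ := hpseg
  have hpA : p - A = b₃ • w := by
    rw [← hp₃, hw]
    have : a₃ = 1 - b₃ := by linarith
    rw [this]; module
  have hlp : ⟪g, p - A⟫ = 0 := by
    rw [hpA, real_inner_smul_right, hgw, mul_zero]
  have hpc : ⟪g, p - c⟫ ≤ -(ρ * ‖g‖) := by
    have : p - c = (p - A) - (c - A) := by abel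
    rw [this, inner_sub_right, hlp]
    linarith
  have hpcnorm : ‖p - c‖ = ρ := by
    rw [← dist_eq_norm]
    exact Metric.mem_sphere.mp hp
  -- p - c = -(ρ/‖g‖) • g
  have hkey2 : p - c = -((ρ/‖g‖) • g) := by
    have hexp : ‖(p - c) + (ρ/‖g‖) • g‖^2
        = ‖p - c‖^2 + 2*((ρ/‖g‖) * ⟪g, p - c⟫) + (ρ/‖g‖)^2 * ‖g‖^2 := by
      rw [norm_add_sq_real, real_inner_smul_right, real_inner_comm (p - c) g,
        norm_smul, Real.norm_eq_abs, abs_of_pos (show (0:ℝ) < ρ/‖g‖ by positivity),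
        mul_pow]
    have e5 : (ρ/‖g‖)^2 * ‖g‖^2 = ρ^2 := by field_simp
    have e6 : (ρ/‖g‖) * ⟪g, p - c⟫ ≤ -ρ^2 := by
      have h3 : ρ / ‖g‖ * ⟪g, p - c⟫ ≤ ρ / ‖g‖ * (-(ρ * ‖g‖)) :=
        mul_le_mul_of_nonneg_left hpc (by positivity)
      have h4 : ρ / ‖g‖ * (-(ρ * ‖g‖)) = -ρ^2 := by field_simp
      linarith [h3, h4.le, h4.ge]
    have hsq : ‖(p - c) + (ρ/‖g‖) • g‖^2 = 0 := by
      have h0 : (0:ℝ) ≤ ‖(p - c) + (ρ/‖g‖) • g‖^2 := sq_nonneg _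
      rw [hexp, hpcnorm, e5]
      rw [hexp, hpcnorm, e5] at h0
      linarith
    have h1 := pow_eq_zero_iff (n := 2) (by norm_num) |>.mp hsq
    have h2 := norm_eq_zero.mp h1
    rw [add_eq_zero_iff_eq_neg] at h2
    exact h2
  -- orthogonality of p - c and w
  have horth : ⟪p - c, w⟫ = 0 := by
    rw [hkey2, inner_neg_left, real_inner_smul_left, hgw]
    ring
  have horth' : ⟪w, p - c⟫ = 0 := by rw [real_inner_comm]; exact horth
  constructor
  · have hApv : A - p = -(b₃ • w) := by rw [← neg_sub p A, hpA]
    have horthA : ⟪A - p, p - c⟫ = 0 := by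
      rw [hApv, inner_neg_left, real_inner_smul_left, horth']; ring
    have : dist A c ^2 = ‖(A - p) + (p - c)‖^2 := by
      rw [dist_eq_norm]; congr 2; abel
    rw [this, norm_add_sq_real, horthA, hpcnorm, ← dist_eq_norm]
    ring
  · have hBpv : B - p = a₃ • w := by
      rw [← hp₃, hw]
      have : a₃ = 1 - b₃ := by linarith
      rw [this]; module
    have horthB : ⟪B - p, p - c⟫ = 0 := by
      rw [hBpv, real_inner_smul_left, horth']; ring
    have : dist B c ^2 = ‖(B - p) + (p - c)‖^2 := by
      rw [dist_eq_norm]; congr 2; abel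
    rw [this, norm_add_sq_real, horthB, hpcnorm, ← dist_eq_norm]
    ring

/-- The sqrt cancellation lemma. -/
lemma x_eq_zero (a b s t x : ℝ) (hs : 0 < s) (ht : 0 < t)
    (h1 : 0 ≤ a - 2*s*x) (h2 : 0 ≤ b - 2*t*x) (h3 : 0 ≤ a + 2*s*x) (h4 : 0 ≤ b + 2*t*x)
    (heq : Real.sqrt (a - 2*s*x) + Real.sqrt (b - 2*t*x)
         = Real.sqrt (a + 2*s*x) + Real.sqrt (b + 2*t*x)) : x = 0 := by
  rcases lt_trichotomy x 0 with hx | hx | hx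
  · exfalso
    have l1 : Real.sqrt (a + 2*s*x) < Real.sqrt (a - 2*s*x) :=
      Real.sqrt_lt_sqrt h3 (by nlinarith)
    have l2 : Real.sqrt (b + 2*t*x) < Real.sqrt (b - 2*t*x) :=
      Real.sqrt_lt_sqrt h4 (by nlinarith)
    linarith
  · exact hx
  · exfalso
    have l1 : Real.sqrt (a - 2*s*x) < Real.sqrt (a + 2*s*x) :=
      Real.sqrt_lt_sqrt h1 (by nlinarith)
    have l2 : Real.sqrt (b - 2*t*x) < Real.sqrt (b + 2*t*x) :=
      Real.sqrt_lt_sqrt h2 (by nlinarith)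
    linarith

/-- Core vector lemma: the Pitot equality forces orthogonality. -/
lemma core_orth (u v : Pt) (s t : ℝ) (hs : 0 < s) (ht : 0 < t)
    (h : ‖s•u - v‖ + ‖t•u - v‖ = ‖t•u + v‖ + ‖s•u + v‖) : ⟪u, v⟫ = 0 := by
  set x : ℝ := ⟪u, v⟫ with hx
  have e1 : ‖s•u - v‖ = Real.sqrt (s^2*‖u‖^2 + ‖v‖^2 - 2*s*x) := by
    rw [show s^2*‖u‖^2 + ‖v‖^2 - 2*s*x = ‖s•u - v‖^2 by
      rw [norm_sub_sq_real, real_inner_smul_left, norm_smul, Real.norm_eq_abs,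
        abs_of_pos hs]; ring]
    rw [Real.sqrt_sq (norm_nonneg _)]
  have e2 : ‖t•u - v‖ = Real.sqrt (t^2*‖u‖^2 + ‖v‖^2 - 2*t*x) := by
    rw [show t^2*‖u‖^2 + ‖v‖^2 - 2*t*x = ‖t•u - v‖^2 by
      rw [norm_sub_sq_real, real_inner_smul_left, norm_smul, Real.norm_eq_abs,
        abs_of_pos ht]; ring]
    rw [Real.sqrt_sq (norm_nonneg _)]
  have e3 : ‖s•u + v‖ = Real.sqrt (s^2*‖u‖^2 + ‖v‖^2 + 2*s*x) := by
    rw [show s^2*‖u‖^2 + ‖v‖^2 + 2*s*x = ‖s•u + v‖^2 by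
      rw [norm_add_sq_real, real_inner_smul_left, norm_smul, Real.norm_eq_abs,
        abs_of_pos hs]; ring]
    rw [Real.sqrt_sq (norm_nonneg _)]
  have e4 : ‖t•u + v‖ = Real.sqrt (t^2*‖u‖^2 + ‖v‖^2 + 2*t*x) := by
    rw [show t^2*‖u‖^2 + ‖v‖^2 + 2*t*x = ‖t•u + v‖^2 by
      rw [norm_add_sq_real, real_inner_smul_left, norm_smul, Real.norm_eq_abs,
        abs_of_pos ht]; ring]
    rw [Real.sqrt_sq (norm_nonneg _)]
  have hxle : x ≤ ‖u‖ * ‖v‖ := le_trans (le_abs_self x) (abs_real_inner_le_norm u v)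
  have hxge : -x ≤ ‖u‖ * ‖v‖ := le_trans (neg_le_abs x) (abs_real_inner_le_norm u v)
  apply x_eq_zero (s^2*‖u‖^2 + ‖v‖^2) (t^2*‖u‖^2 + ‖v‖^2) s t x hs ht
  · nlinarith [sq_nonneg (s*‖u‖ - ‖v‖),
      mul_le_mul_of_nonneg_left hxle (show (0:ℝ) ≤ 2*s by positivity)]
  · nlinarith [sq_nonneg (t*‖u‖ - ‖v‖),
      mul_le_mul_of_nonneg_left hxle (show (0:ℝ) ≤ 2*t by positivity)]
  · nlinarith [sq_nonneg (s*‖u‖ - ‖v‖),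
      mul_le_mul_of_nonneg_left hxge (show (0:ℝ) ≤ 2*s by positivity)]
  · nlinarith [sq_nonneg (t*‖u‖ - ‖v‖),
      mul_le_mul_of_nonneg_left hxge (show (0:ℝ) ≤ 2*t by positivity)]
  · rw [← e1, ← e2, ← e3, ← e4]; linarith

/-- Orthogonal vectors: ‖x - y‖ = ‖x + y‖. -/
lemma norm_sub_eq_norm_add_of_inner_zero {x y : Pt} (h : ⟪x, y⟫ = 0) :
    ‖x - y‖ = ‖x + y‖ := by
  have h1 : ‖x - y‖^2 = ‖x + y‖^2 := by
    rw [norm_sub_sq_real, norm_add_sq_real, h]; ring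
  exact (sq_eq_sq₀ (norm_nonneg _) (norm_nonneg _)).mp h1

theorem stmt12 (A₁ A₂ A₃ A₄ : Pt) (hconv : ConvexQuad A₁ A₂ A₃ A₄)
    (htan : IsTangential A₁ A₂ A₃ A₄) (hmdq : IsMidpointDiagonalQuad A₁ A₂ A₃ A₄) :
    -- Q is a kite: two pairs of adjacent sides are equal
    ((dist A₁ A₄ = dist A₁ A₂ ∧ dist A₂ A₃ = dist A₃ A₄) ∨
      (dist A₁ A₂ = dist A₂ A₃ ∧ dist A₁ A₄ = dist A₃ A₄)) ∧
    -- in particular the diagonals are perpendicular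
    inner ℝ (A₃ - A₁) (A₄ - A₂) = (0 : ℝ) := by
  obtain ⟨h123, h234, h341, h412, -⟩ := hconv
  obtain ⟨c, ρ, hρ, hsub, h12, h23, h34, h41⟩ := htan
  obtain ⟨P, hP13, hP24, hPmid⟩ := hmdq
  -- non-collinearity facts
  have hc123 : ¬ Collinear ℝ ({A₁, A₂, A₃} : Set Pt) :=
    affineIndependent_iff_not_collinear_set.mp h123
  have hc234 : ¬ Collinear ℝ ({A₂, A₃, A₄} : Set Pt) :=
    affineIndependent_iff_not_collinear_set.mp h234
  have hc341 : ¬ Collinear ℝ ({A₃, A₄, A₁} : Set Pt) :=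
    affineIndependent_iff_not_collinear_set.mp h341
  have hc412 : ¬ Collinear ℝ ({A₄, A₁, A₂} : Set Pt) :=
    affineIndependent_iff_not_collinear_set.mp h412
  -- set equalities for the convex hull
  have hset2 : ({A₂, A₃, A₄, A₁} : Set Pt) = {A₁, A₂, A₃, A₄} := by
    ext x; simp only [Set.mem_insert_iff, Set.mem_singleton_iff]; tauto
  have hset3 : ({A₃, A₄, A₁, A₂} : Set Pt) = {A₁, A₂, A₃, A₄} := by
    ext x; simp only [Set.mem_insert_iff, Set.mem_singleton_iff]; tauto
  have hset4 : ({A₄, A₁, A₂, A₃} : Set Pt) = {A₁, A₂, A₃, A₄} := by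
    ext x; simp only [Set.mem_insert_iff, Set.mem_singleton_iff]; tauto
  obtain ⟨p12, ⟨hp12s, hp12seg⟩, -⟩ := h12
  obtain ⟨p23, ⟨hp23s, hp23seg⟩, -⟩ := h23
  obtain ⟨p34, ⟨hp34s, hp34seg⟩, -⟩ := h34
  obtain ⟨p41, ⟨hp41s, hp41seg⟩, -⟩ := h41
  have hP31 : P ∈ openSegment ℝ A₃ A₁ := by rwa [openSegment_symm]
  have hP42 : P ∈ openSegment ℝ A₄ A₂ := by rwa [openSegment_symm]
  have t12 := tangent_len A₁ A₂ A₃ A₄ c P p12 ρ hρ hc123 hP13 hP24 hsub hp12s hp12seg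
  have t23 := tangent_len A₂ A₃ A₄ A₁ c P p23 ρ hρ hc234 hP24 hP31
    (by rwa [hset2]) hp23s hp23seg
  have t34 := tangent_len A₃ A₄ A₁ A₂ c P p34 ρ hρ hc341 hP31 hP42
    (by rwa [hset3]) hp34s hp34seg
  have t41 := tangent_len A₄ A₁ A₂ A₃ c P p41 ρ hρ hc412 hP42 hP13
    (by rwa [hset4]) hp41s hp41seg
  -- equal tangent lengths from each vertex
  have w1 : dist A₁ p12 = dist A₁ p41 := by
    have := t12.1; have := t41.2
    refine (sq_eq_sq₀ dist_nonneg dist_nonneg).mp ?_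
    nlinarith [t12.1, t41.2]
  have w2 : dist A₂ p23 = dist A₂ p12 := by
    refine (sq_eq_sq₀ dist_nonneg dist_nonneg).mp ?_
    nlinarith [t23.1, t12.2]
  have w3 : dist A₃ p34 = dist A₃ p23 := by
    refine (sq_eq_sq₀ dist_nonneg dist_nonneg).mp ?_
    nlinarith [t34.1, t23.2]
  have w4 : dist A₄ p41 = dist A₄ p34 := by
    refine (sq_eq_sq₀ dist_nonneg dist_nonneg).mp ?_
    nlinarith [t41.1, t34.2]
  -- Pitot theorem
  have s12 : dist A₁ p12 + dist p12 A₂ = dist A₁ A₂ :=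
    (mem_segment_iff_wbtw.mp hp12seg).dist_add_dist
  have s23 : dist A₂ p23 + dist p23 A₃ = dist A₂ A₃ :=
    (mem_segment_iff_wbtw.mp hp23seg).dist_add_dist
  have s34 : dist A₃ p34 + dist p34 A₄ = dist A₃ A₄ :=
    (mem_segment_iff_wbtw.mp hp34seg).dist_add_dist
  have s41 : dist A₄ p41 + dist p41 A₁ = dist A₄ A₁ :=
    (mem_segment_iff_wbtw.mp hp41seg).dist_add_dist
  have hpitot : dist A₁ A₂ + dist A₃ A₄ = dist A₂ A₃ + dist A₄ A₁ := by
    have c12 : dist p12 A₂ = dist A₂ p12 := dist_comm _ _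
    have c23 : dist p23 A₃ = dist A₃ p23 := dist_comm _ _
    have c34 : dist p34 A₄ = dist A₄ p34 := dist_comm _ _
    have c41 : dist p41 A₁ = dist A₁ p41 := dist_comm _ _
    linarith
  clear t12 t23 t34 t41 w1 w2 w3 w4 s12 s23 s34 s41 hp12s hp23s hp34s hp41s
    hp12seg hp23seg hp34seg hp41seg hsub
  -- case analysis on the midpoint
  rcases hPmid with hm | hm
  · -- P is the midpoint of A₁A₃; second disjunct
    obtain ⟨a, b, ha, hb, hab, hPd⟩ := hP24
    have ha' : a = 1 - b := by linarith
    subst ha'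
    set u : Pt := A₃ - P with hu
    set v : Pt := A₄ - A₂ with hv
    have hA1 : A₁ - P = -u := by
      rw [hu, hm]
      have : midpoint ℝ A₁ A₃ = (2:ℝ)⁻¹ • (A₁ + A₃) := by
        rw [midpoint_eq_smul_add]; norm_num
      rw [this]; module
    have hA2 : A₂ - P = -(b • v) := by
      rw [hv, ← hPd]; module
    have hA4 : A₄ - P = (1-b) • v := by
      rw [hv, ← hPd]; module
    have hbb : 0 < 1 - b := ha
    -- rewrite the four sides
    have d12 : dist A₁ A₂ = ‖b•v - u‖ := by
      rw [dist_eq_norm, show A₁ - A₂ = (A₁ - P) - (A₂ - P) by abel, hA1, hA2,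
        show -u - -(b•v) = b•v - u by abel]
    have d23 : dist A₂ A₃ = ‖b•v + u‖ := by
      rw [dist_eq_norm, show A₂ - A₃ = (A₂ - P) - (A₃ - P) by abel, hA2, ← hu,
        show -(b•v) - u = -(b•v + u) by abel, norm_neg]
    have d34 : dist A₃ A₄ = ‖(1-b)•v - u‖ := by
      rw [dist_eq_norm, show A₃ - A₄ = (A₃ - P) - (A₄ - P) by abel, ← hu, hA4,
        show u - (1-b)•v = -((1-b)•v - u) by abel, norm_neg]
    have d41 : dist A₄ A₁ = ‖(1-b)•v + u‖ := by
      rw [dist_eq_norm, show A₄ - A₁ = (A₄ - P) - (A₁ - P) by abel, hA4, hA1,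
        show (1-b)•v - -u = (1-b)•v + u by abel]
    have horth : ⟪v, u⟫ = 0 := by
      apply core_orth v u b (1-b) hb hbb
      rw [← d12, ← d34, ← d41, ← d23]
      linarith
    constructor
    · right
      constructor
      · rw [d12, d23]
        exact norm_sub_eq_norm_add_of_inner_zero (by
          rw [real_inner_smul_left, horth, mul_zero])
      · have h14 : dist A₁ A₄ = ‖(1-b)•v + u‖ := by rw [dist_comm]; exact d41
        rw [h14, d34]
        exact (norm_sub_eq_norm_add_of_inner_zero (by
          rw [real_inner_smul_left, horth, mul_zero])).symm
    · have h31 : A₃ - A₁ = (A₃ - P) - (A₁ - P) := by abel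
      have horth' : ⟪u, v⟫ = 0 := by rw [real_inner_comm]; exact horth
      rw [h31, ← hu, hA1, show u - -u = u + u by abel]
      rw [inner_add_left, horth']
      norm_num
  · -- P is the midpoint of A₂A₄; first disjunct
    obtain ⟨a, b, ha, hb, hab, hPd⟩ := hP13
    have ha' : a = 1 - b := by linarith
    subst ha'
    set u : Pt := A₃ - A₁ with hu
    set v : Pt := A₄ - P with hv
    have hA1 : A₁ - P = -(b • u) := by
      rw [hu, ← hPd]; module
    have hA3 : A₃ - P = (1-b) • u := by
      rw [hu, ← hPd]; module
    have hA2 : A₂ - P = -v := by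
      rw [hv, hm]
      have : midpoint ℝ A₂ A₄ = (2:ℝ)⁻¹ • (A₂ + A₄) := by
        rw [midpoint_eq_smul_add]; norm_num
      rw [this]; module
    have hbb : 0 < 1 - b := ha
    have d12 : dist A₁ A₂ = ‖b•u - v‖ := by
      rw [dist_eq_norm, show A₁ - A₂ = (A₁ - P) - (A₂ - P) by abel, hA1, hA2,
        show -(b•u) - -v = -(b•u - v) by abel, norm_neg]
    have d23 : dist A₂ A₃ = ‖(1-b)•u + v‖ := by
      rw [dist_eq_norm, show A₂ - A₃ = (A₂ - P) - (A₃ - P) by abel, hA2, hA3,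
        show -v - (1-b)•u = -((1-b)•u + v) by abel, norm_neg]
    have d34 : dist A₃ A₄ = ‖(1-b)•u - v‖ := by
      rw [dist_eq_norm, show A₃ - A₄ = (A₃ - P) - (A₄ - P) by abel, hA3, ← hv]
    have d41 : dist A₄ A₁ = ‖b•u + v‖ := by
      rw [dist_eq_norm, show A₄ - A₁ = (A₄ - P) - (A₁ - P) by abel, ← hv, hA1,
        show v - -(b•u) = b•u + v by abel]
    have horth : ⟪u, v⟫ = 0 := by
      apply core_orth u v b (1-b) hb hbb
      rw [← d12, ← d34, ← d23, ← d41]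
      linarith
    constructor
    · left
      constructor
      · rw [d12]
        rw [show dist A₁ A₄ = ‖b•u + v‖ from by rw [dist_comm]; exact d41]
        exact (norm_sub_eq_norm_add_of_inner_zero (by
          rw [real_inner_smul_left, horth, mul_zero])).symm
      · rw [d23, d34]
        exact (norm_sub_eq_norm_add_of_inner_zero (by
          rw [real_inner_smul_left, horth, mul_zero])).symm
    · have h42 : A₄ - A₂ = (A₄ - P) - (A₂ - P) := by abel
      rw [h42, hA2, ← hv, show v - -v = v + v by abel]
      rw [inner_add_right, horth]
      norm_num
end
end

section
/- If a convex quadrilateral Q is both tangential and orthodiagonal (its diagonals are perpendicular), then Q is a midpoint diagonal quadrilateral. -/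
noncomputable section

open RealInnerProductSpace

/-- Rotation by 90 degrees. -/
def Jrot (v : Pt) : Pt := !₂[-(v 1), v 0]

lemma inner2 (x y : Pt) : ⟪x, y⟫ = x 0 * y 0 + x 1 * y 1 := by
  simp [PiLp.inner_apply, Fin.sum_univ_two]
  ring

lemma innerJ (v w : Pt) : ⟪Jrot v, w⟫ = -(v 1) * w 0 + v 0 * w 1 := by
  simp [inner2, Jrot]

lemma J_perp (v : Pt) : ⟪Jrot v, v⟫ = 0 := by rw [innerJ]; ring

lemma eq_smul_of_det_zero (v w : Pt) (hv : v ≠ 0) (h : ⟪Jrot v, w⟫ = 0) :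
    ∃ t : ℝ, w = t • v := by
  rw [innerJ] at h
  have hv' : v 0 ≠ 0 ∨ v 1 ≠ 0 := by
    by_contra hc
    push_neg at hc
    apply hv
    ext i
    fin_cases i <;> simp [hc.1, hc.2]
  rcases hv' with h0 | h1
  · refine ⟨w 0 / v 0, ?_⟩
    ext i
    fin_cases i <;> simp [PiLp.smul_apply, smul_eq_mul] <;> field_simp <;> nlinarith [h]
  · refine ⟨w 1 / v 1, ?_⟩
    ext i
    fin_cases i <;> simp [PiLp.smul_apply, smul_eq_mul] <;> field_simp <;> nlinarith [h]

lemma collinear_of (A B C : Pt) (t : ℝ) (h : C - A = t • (B - A)) :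
    Collinear ℝ ({A, B, C} : Set Pt) := by
  rw [collinear_iff_of_mem (Set.mem_insert A {B, C})]
  refine ⟨B - A, ?_⟩
  intro p hp
  rcases hp with rfl | hp
  · exact ⟨0, by simp⟩
  rcases hp with rfl | hp
  · exact ⟨1, by simp⟩
  rcases hp with rfl
  exact ⟨t, by rw [← h]; simp⟩

lemma det_ne (A B C : Pt) (h : AffineIndependent ℝ ![A, B, C]) :
    ⟪Jrot (B - A), C - A⟫ ≠ 0 := by
  intro h0
  have hBA : B - A ≠ 0 := by
    have : B ≠ A := h.injective.ne (by decide : (1 : Fin 3) ≠ 0)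
    exact sub_ne_zero.mpr this
  obtain ⟨t, ht⟩ := eq_smul_of_det_zero _ _ hBA h0
  exact (affineIndependent_iff_not_collinear_set.mp h) (collinear_of A B C t ht)

lemma det_ne' (A B C D : Pt) (h : AffineIndependent ℝ ![D, A, B]) :
    ⟪Jrot (B - A), D - A⟫ ≠ 0 := by
  intro h0
  have hBA : B - A ≠ 0 := by
    have : A ≠ B := h.injective.ne (by decide : (1 : Fin 3) ≠ 2)
    exact sub_ne_zero.mpr (Ne.symm this)
  obtain ⟨t, ht⟩ := eq_smul_of_det_zero _ _ hBA h0
  have hcol : Collinear ℝ ({A, B, D} : Set Pt) := collinear_of A B D t ht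
  have hset : ({D, A, B} : Set Pt) = {A, B, D} := by ext x; simp; tauto
  exact (affineIndependent_iff_not_collinear_set.mp h) (by rw [hset]; exact hcol)

lemma side_normal (A B C D P : Pt)
    (h1 : AffineIndependent ℝ ![A, B, C]) (h2 : AffineIndependent ℝ ![D, A, B])
    (hP1 : P ∈ openSegment ℝ A C) (hP2 : P ∈ openSegment ℝ B D) :
    ∃ n : Pt, ⟪n, B - A⟫ = 0 ∧ 0 < ⟪n, C - A⟫ ∧ 0 < ⟪n, D - A⟫ := by
  set n := Jrot (B - A) with hn
  have hC : ⟪n, C - A⟫ ≠ 0 := det_ne A B C h1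
  have hD : ⟪n, D - A⟫ ≠ 0 := det_ne' A B C D h2
  obtain ⟨a, b, ha, hb, hab, hP⟩ := hP1
  obtain ⟨a', b', ha', hb', hab', hP'⟩ := hP2
  have ha2 : a = 1 - b := by linarith
  have ha2' : a' = 1 - b' := by linarith
  have e1 : ⟪n, P - A⟫ = b * ⟪n, C - A⟫ := by
    rw [← hP, ha2, show (1 - b) • A + b • C - A = b • (C - A) by module,
      real_inner_smul_right]
  have e2 : ⟪n, P - A⟫ = b' * ⟪n, D - A⟫ := by
    rw [← hP', ha2', show (1 - b') • B + b' • D - A = (1 - b') • (B - A) + b' • (D - A) by module,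
      inner_add_right, real_inner_smul_right, real_inner_smul_right, J_perp]
    ring
  rcases lt_or_gt_of_ne hC with hneg | hpos
  · refine ⟨-n, by rw [inner_neg_left, J_perp, neg_zero], ?_, ?_⟩
    · rw [inner_neg_left]; linarith
    · rw [inner_neg_left]
      rcases lt_or_gt_of_ne hD with h' | h'
      · linarith
      · exfalso; nlinarith
  · refine ⟨n, J_perp _, hpos, ?_⟩
    rcases lt_or_gt_of_ne hD with h' | h'
    · exfalso; nlinarith
    · exact h'

lemma side_eq (c : Pt) (ρ : ℝ) (hρ : 0 < ρ) (A B n p : Pt) (hn : n ≠ 0)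
    (hnAB : ⟪n, B - A⟫ = 0)
    (hsub : Metric.sphere c ρ ⊆ {x : Pt | 0 ≤ ⟪n, x - A⟫})
    (hp : p ∈ Metric.sphere c ρ) (hps : p ∈ segment ℝ A B) :
    dist A B = Real.sqrt (dist A c ^ 2 - ρ ^ 2) + Real.sqrt (dist B c ^ 2 - ρ ^ 2) := by
  have hn' : (0 : ℝ) < ‖n‖ := norm_pos_iff.mpr hn
  have hq : c - (ρ / ‖n‖) • n ∈ Metric.sphere c ρ := by
    rw [Metric.mem_sphere, dist_eq_norm]
    rw [show c - (ρ / ‖n‖) • n - c = -((ρ / ‖n‖) • n) by module]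
    rw [norm_neg, norm_smul, Real.norm_eq_abs, abs_of_pos (by positivity)]
    field_simp
  have h1 : 0 ≤ ⟪n, c - (ρ / ‖n‖) • n - A⟫ := hsub hq
  have h2 : ρ * ‖n‖ ≤ ⟪n, c - A⟫ := by
    rw [show c - (ρ / ‖n‖) • n - A = (c - A) - (ρ / ‖n‖) • n by module,
      inner_sub_right, real_inner_smul_right, real_inner_self_eq_norm_sq] at h1
    have : ρ / ‖n‖ * ‖n‖ ^ 2 = ρ * ‖n‖ := by field_simp
    linarith [this ▸ h1]
  obtain ⟨a, b, ha, hb, hab, hpdef⟩ := hps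
  have ha2 : a = 1 - b := by linarith
  have hpA : p - A = b • (B - A) := by rw [← hpdef, ha2]; module
  have hpB : B - p = (1 - b) • (B - A) := by rw [← hpdef, ha2]; module
  have h3 : ⟪n, p - A⟫ = 0 := by rw [hpA, real_inner_smul_right, hnAB]; ring
  have h4 : ⟪n, c - p⟫ = ⟪n, c - A⟫ := by
    rw [show c - p = (c - A) - (p - A) by module, inner_sub_right, h3, sub_zero]
  have h5 : ‖c - p‖ = ρ := by
    rw [← dist_eq_norm, dist_comm]; exact Metric.mem_sphere.mp hp
  have hCS : ⟪n, c - p⟫ ≤ ‖n‖ * ‖c - p‖ := real_inner_le_norm n (c - p)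
  have h6 : ⟪n, c - p⟫ = ρ * ‖n‖ := by
    rw [h5] at hCS
    rw [h4]
    nlinarith
  have h7 : ‖n‖ • (c - p) = ρ • n := by
    have hz : ‖‖n‖ • (c - p) - ρ • n‖ ^ 2 = 0 := by
      rw [norm_sub_sq_real, real_inner_smul_left, real_inner_smul_right,
        norm_smul, norm_smul, real_inner_comm, h6]
      simp [Real.norm_eq_abs, abs_of_pos hρ, abs_of_pos hn', h5, mul_pow]
      ring
    have := pow_eq_zero_iff (n := 2) (by norm_num) |>.mp hz
    rw [norm_eq_zero, sub_eq_zero] at this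
    exact this
  have h8 : ⟪c - p, B - A⟫ = 0 := by
    have h9 := congrArg (fun x => ⟪x, B - A⟫) h7
    simp only [real_inner_smul_left] at h9
    rw [hnAB, mul_zero] at h9
    exact (mul_eq_zero.mp h9).resolve_left (ne_of_gt hn')
  have pyth : ∀ (X : Pt) (s : ℝ), X - p = s • (B - A) →
      dist X p ^ 2 = dist X c ^ 2 - ρ ^ 2 := by
    intro X s hX
    have hd : dist X c ^ 2 = dist X p ^ 2 + ρ ^ 2 := by
      rw [dist_eq_norm, dist_eq_norm,
        show X - c = (X - p) + (p - c) by module, norm_add_sq_real]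
      have : ⟪X - p, p - c⟫ = 0 := by
        rw [hX, real_inner_smul_left, show p - c = -(c - p) by module,
          inner_neg_right, real_inner_comm, h8]
        ring
      rw [this, show p - c = -(c - p) by module, norm_neg, h5]
      ring
    linarith
  have pA : dist A p ^ 2 = dist A c ^ 2 - ρ ^ 2 :=
    pyth A (-b) (by rw [show A - p = -(p - A) by module, hpA]; module)
  have pB : dist B p ^ 2 = dist B c ^ 2 - ρ ^ 2 := pyth B (1 - b) hpB
  have dA : dist A p = Real.sqrt (dist A c ^ 2 - ρ ^ 2) := by
    rw [← pA, Real.sqrt_sq dist_nonneg]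
  have dB : dist B p = Real.sqrt (dist B c ^ 2 - ρ ^ 2) := by
    rw [← pB, Real.sqrt_sq dist_nonneg]
  rw [← dist_add_dist_of_mem_segment ⟨a, b, ha, hb, hab, hpdef⟩, dA, ← dB, dist_comm p B]

lemma tangent_side (c : Pt) (ρ : ℝ) (hρ : 0 < ρ) (A B C D P : Pt)
    (h1 : AffineIndependent ℝ ![A, B, C]) (h2 : AffineIndependent ℝ ![D, A, B])
    (hP1 : P ∈ openSegment ℝ A C) (hP2 : P ∈ openSegment ℝ B D)
    (hsub : Metric.sphere c ρ ⊆ convexHull ℝ {A, B, C, D})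
    (hex : ∃ p : Pt, p ∈ Metric.sphere c ρ ∩ segment ℝ A B) :
    dist A B = Real.sqrt (dist A c ^ 2 - ρ ^ 2) + Real.sqrt (dist B c ^ 2 - ρ ^ 2) := by
  obtain ⟨n, hnAB, hC, hD⟩ := side_normal A B C D P h1 h2 hP1 hP2
  have hn : n ≠ 0 := by
    intro h0
    rw [h0, inner_zero_left] at hC
    exact lt_irrefl 0 hC
  have hconv : Convex ℝ {x : Pt | 0 ≤ ⟪n, x - A⟫} := by
    intro x hx y hy s t hs ht hst
    simp only [Set.mem_setOf_eq] at *
    rw [show s • x + t • y - A = s • (x - A) + t • (y - A) by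
        rw [show s = 1 - t by linarith]; module,
      inner_add_right, real_inner_smul_right, real_inner_smul_right]
    positivity
  have hvert : ({A, B, C, D} : Set Pt) ⊆ {x : Pt | 0 ≤ ⟪n, x - A⟫} := by
    intro x hx
    simp only [Set.mem_insert_iff, Set.mem_singleton_iff] at hx
    rcases hx with rfl | rfl | rfl | rfl
    · simp [Set.mem_setOf_eq]
    · exact le_of_eq hnAB.symm
    · exact le_of_lt hC
    · exact le_of_lt hD
  have hsub2 : Metric.sphere c ρ ⊆ {x : Pt | 0 ≤ ⟪n, x - A⟫} :=
    hsub.trans (convexHull_min hvert hconv)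
  obtain ⟨p, hp, hps⟩ := hex
  exact side_eq c ρ hρ A B n p hn hnAB hsub2 hp hps

lemma mid_of (X Y P : Pt) (hXY : X ≠ Y) (hP : P ∈ openSegment ℝ X Y)
    (hd : dist P X = dist P Y) : P = midpoint ℝ X Y := by
  obtain ⟨u, v, hu, hv, huv, hPdef⟩ := hP
  have hu2 : u = 1 - v := by linarith
  have h1 : P - X = v • (Y - X) := by rw [← hPdef, hu2]; module
  have h2 : P - Y = -u • (Y - X) := by rw [← hPdef, hu2]; module
  have hnorm : (0 : ℝ) < ‖Y - X‖ := norm_pos_iff.mpr (sub_ne_zero.mpr (Ne.symm hXY))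
  have e1 : dist P X = v * ‖Y - X‖ := by
    rw [dist_eq_norm, h1, norm_smul, Real.norm_eq_abs, abs_of_pos hv]
  have e2 : dist P Y = u * ‖Y - X‖ := by
    rw [dist_eq_norm, h2, norm_smul, Real.norm_eq_abs, abs_neg, abs_of_pos hu]
  have huv2 : u = v := by
    rw [e1, e2] at hd
    exact mul_right_cancel₀ (ne_of_gt hnorm) hd.symm
  have hv2 : v = 1 / 2 := by rw [huv2] at huv; linarith
  have hu3 : u = 1 / 2 := by rw [huv2, hv2]
  rw [← hPdef, hu3, hv2, midpoint_eq_smul_add]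
  have : (⅟2 : ℝ) = 1 / 2 := by norm_num
  rw [this]
  module

theorem stmt13 (A₁ A₂ A₃ A₄ : Pt) (hconv : ConvexQuad A₁ A₂ A₃ A₄)
    (htan : IsTangential A₁ A₂ A₃ A₄)
    (horth : inner ℝ (A₃ - A₁) (A₄ - A₂) = (0 : ℝ)) :
    IsMidpointDiagonalQuad A₁ A₂ A₃ A₄ := by
  obtain ⟨hI1, hI2, hI3, hI4, P, hP13, hP24⟩ := hconv
  obtain ⟨c, ρ, hρ, hsub, ht12, ht23, ht34, ht41⟩ := htan
  have hP31 : P ∈ openSegment ℝ A₃ A₁ := by rwa [openSegment_symm]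
  have hP42 : P ∈ openSegment ℝ A₄ A₂ := by rwa [openSegment_symm]
  have hs2 : ({A₂, A₃, A₄, A₁} : Set Pt) = {A₁, A₂, A₃, A₄} := by ext x; simp; tauto
  have hs3 : ({A₃, A₄, A₁, A₂} : Set Pt) = {A₁, A₂, A₃, A₄} := by ext x; simp; tauto
  have hs4 : ({A₄, A₁, A₂, A₃} : Set Pt) = {A₁, A₂, A₃, A₄} := by ext x; simp; tauto
  have e12 := tangent_side c ρ hρ A₁ A₂ A₃ A₄ P hI1 hI4 hP13 hP24 hsub ht12.exists
  have e23 := tangent_side c ρ hρ A₂ A₃ A₄ A₁ P hI2 hI1 hP24 hP31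
    (by rw [hs2]; exact hsub) ht23.exists
  have e34 := tangent_side c ρ hρ A₃ A₄ A₁ A₂ P hI3 hI2 hP31 hP42
    (by rw [hs3]; exact hsub) ht34.exists
  have e41 := tangent_side c ρ hρ A₄ A₁ A₂ A₃ P hI4 hI3 hP42 hP13
    (by rw [hs4]; exact hsub) ht41.exists
  have pitot : dist A₁ A₂ + dist A₃ A₄ = dist A₂ A₃ + dist A₄ A₁ := by
    rw [e12, e23, e34, e41]; ring
  -- orthodiagonal relation
  have hd : ∀ x y : Pt, dist x y ^ 2 = ⟪x, x⟫ - 2 * ⟪x, y⟫ + ⟪y, y⟫ := by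
    intro x y
    rw [dist_eq_norm, ← real_inner_self_eq_norm_sq, inner_sub_left, inner_sub_right,
      inner_sub_right, real_inner_comm y x]
    ring
  have horth' : ⟪A₃, A₄⟫ - ⟪A₃, A₂⟫ - ⟪A₁, A₄⟫ + ⟪A₁, A₂⟫ = 0 := by
    have h := horth
    rw [show (inner ℝ (A₃ - A₁) (A₄ - A₂) : ℝ) = ⟪A₃ - A₁, A₄ - A₂⟫ from rfl,
      inner_sub_left, inner_sub_right, inner_sub_right] at h
    linarith
  have hOD : dist A₁ A₂ ^ 2 + dist A₃ A₄ ^ 2 = dist A₂ A₃ ^ 2 + dist A₄ A₁ ^ 2 := by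
    rw [hd, hd, hd, hd]
    have c12 := real_inner_comm A₁ A₂
    have c23 := real_inner_comm A₂ A₃
    have c34 := real_inner_comm A₃ A₄
    have c41 := real_inner_comm A₄ A₁
    have c13 := real_inner_comm A₁ A₃
    have c24 := real_inner_comm A₂ A₄
    linarith
  have hfac : (dist A₁ A₂ - dist A₂ A₃) * (dist A₁ A₂ - dist A₄ A₁) = 0 := by
    have hc : dist A₃ A₄ = dist A₂ A₃ + dist A₄ A₁ - dist A₁ A₂ := by linarith
    rw [hc] at hOD
    linear_combination hOD / 2
  have h13 : A₁ ≠ A₃ := (hI3.injective.ne (by decide : (2 : Fin 3) ≠ 0))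
  have h24 : A₂ ≠ A₄ := (hI2.injective.ne (by decide : (0 : Fin 3) ≠ 2))
  rcases mul_eq_zero.mp hfac with h | h
  · -- dist A₁ A₂ = dist A₂ A₃, so A₂ and A₄ are on the perp bisector of A₁A₃
    have hab : dist A₁ A₂ = dist A₂ A₃ := by linarith
    have hcd : dist A₃ A₄ = dist A₄ A₁ := by linarith
    have hA2 : A₂ ∈ AffineSubspace.perpBisector A₁ A₃ := by
      rw [AffineSubspace.mem_perpBisector_iff_dist_eq]
      rw [dist_comm]; exact hab
    have hA4 : A₄ ∈ AffineSubspace.perpBisector A₁ A₃ := by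
      rw [AffineSubspace.mem_perpBisector_iff_dist_eq]
      rw [dist_comm A₃ A₄] at hcd
      exact hcd.symm
    have hPmem : P ∈ (AffineSubspace.perpBisector A₁ A₃ : Set Pt) :=
      (AffineSubspace.perpBisector A₁ A₃).convex.segment_subset hA2 hA4
        (openSegment_subset_segment ℝ A₂ A₄ hP24)
    have hPd : dist P A₁ = dist P A₃ :=
      AffineSubspace.mem_perpBisector_iff_dist_eq.mp hPmem
    exact ⟨P, hP13, hP24, Or.inl (mid_of A₁ A₃ P h13 hP13 hPd)⟩
  · -- dist A₁ A₂ = dist A₄ A₁, so A₁ and A₃ are on the perp bisector of A₂A₄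
    have hab : dist A₁ A₂ = dist A₄ A₁ := by linarith
    have hcd : dist A₃ A₄ = dist A₂ A₃ := by linarith
    have hA1 : A₁ ∈ AffineSubspace.perpBisector A₂ A₄ := by
      rw [AffineSubspace.mem_perpBisector_iff_dist_eq]
      rw [dist_comm A₄ A₁] at hab
      exact hab
    have hA3 : A₃ ∈ AffineSubspace.perpBisector A₂ A₄ := by
      rw [AffineSubspace.mem_perpBisector_iff_dist_eq]
      rw [dist_comm A₂ A₃] at hcd
      exact hcd.symm
    have hPmem : P ∈ (AffineSubspace.perpBisector A₂ A₄ : Set Pt) :=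
      (AffineSubspace.perpBisector A₂ A₄).convex.segment_subset hA1 hA3
        (openSegment_subset_segment ℝ A₁ A₃ hP13)
    have hPd : dist P A₂ = dist P A₄ :=
      AffineSubspace.mem_perpBisector_iff_dist_eq.mp hPmem
    exact ⟨P, hP13, hP24, Or.inr (mid_of A₂ A₄ P h24 hP24 hPd)⟩
end
end
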